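/- Let η > 0, s ∈ (−1/2, 0), δ ∈ [0, s + 1/2), 0 < T ≤ 1, and let S(t) be the semigroup with symbol e^{(iβk|k|−η(k²−|k|))t}. If u : (0,T] → L²(𝕋) satisfies sup_{t∈(0,T]}(‖u(t)‖_{H^s} + t^{|s|/2}‖u(t)‖_{L²}) < ∞, then the map t ↦ ∫_0^t S(t−t') ∂_x(u(t')²) dt' is continuous from [0,T] into H^{s+δ}(𝕋). -/

import Mathlib

/-- The H^s(𝕋) norm, expressed through the Fourier coefficients. -/
noncomputable def hsNorm (s : ℝ) (f : ℤ → ℂ) : ℝ :=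
  Real.sqrt (2 * Real.pi * ∑' k : ℤ, (1 + (k:ℝ) ^ 2) ^ s * ‖f k‖ ^ 2)

/-- The L²(𝕋) norm, expressed through the Fourier coefficients. -/
noncomputable def l2Norm (f : ℤ → ℂ) : ℝ :=
  Real.sqrt (2 * Real.pi * ∑' k : ℤ, ‖f k‖ ^ 2)

/-- The Fourier symbol `e^{(iβk|k| − η(k²−|k|)) t}` of the Chen–Lee semigroup `S(t)`. -/
noncomputable def semigroupSymbol (β η t : ℝ) (k : ℤ) : ℂ :=
  Complex.exp ((Complex.I * (β * (k:ℝ) * |(k:ℝ)| : ℝ) -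
    ((η * ((k:ℝ) ^ 2 - |(k:ℝ)|) : ℝ) : ℂ)) * (t : ℝ))

/-- The k-th Fourier coefficient of the Duhamel term `∫_0^t S(t−t') ∂ₓ(u(t')²) dt'`. -/
noncomputable def duhamelSq (β η : ℝ) (u : ℝ → ℤ → ℂ) (t : ℝ) (k : ℤ) : ℂ :=
  ∫ t' in Set.Ioo (0:ℝ) t,
    semigroupSymbol β η (t - t') k *
      (Complex.I * (k:ℝ) * ∑' j : ℤ, u t' j * u t' (k - j))

open MeasureTheory Filter Topology Set

lemma xpow_exp_le {x p : ℝ} (hx : 0 ≤ x) (hp0 : 0 ≤ p) (hp1 : p ≤ 1) :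
    x ^ p * Real.exp (-x) ≤ 1 := by
  rcases le_or_gt x 1 with h | h
  · have h1 : x ^ p ≤ 1 := Real.rpow_le_one hx h hp0
    have h2 : Real.exp (-x) ≤ 1 := Real.exp_le_one_iff.mpr (by linarith)
    calc x ^ p * Real.exp (-x) ≤ 1 * 1 :=
          mul_le_mul h1 h2 (Real.exp_nonneg _) zero_le_one
      _ = 1 := by ring
  · have h1 : x ^ p ≤ x := by
      calc x ^ p ≤ x ^ (1:ℝ) := Real.rpow_le_rpow_of_exponent_le h.le hp1
        _ = x := Real.rpow_one x
    have h2 : x ≤ Real.exp x := (Real.add_one_le_exp x).trans' (by linarith)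
    have h3 : Real.exp (-x) = (Real.exp x)⁻¹ := Real.exp_neg x
    have hex : 0 < Real.exp x := Real.exp_pos x
    calc x ^ p * Real.exp (-x) ≤ x * Real.exp (-x) :=
          mul_le_mul_of_nonneg_right h1 (Real.exp_nonneg _)
      _ ≤ Real.exp x * (Real.exp x)⁻¹ := by
          rw [h3]; exact mul_le_mul_of_nonneg_right h2 (by positivity)
      _ = 1 := mul_inv_cancel₀ hex.ne'

lemma conv_summable {a : ℤ → ℂ} (h : Summable fun j => ‖a j‖ ^ 2) (k : ℤ) :
    Summable fun j => ‖a j * a (k - j)‖ := by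
  have h2 : Summable fun j => ‖a (k - j)‖ ^ 2 := by
    have := (Equiv.subLeft k).summable_iff.mpr h
    simpa [Equiv.subLeft, Function.comp_def] using this
  refine Summable.of_nonneg_of_le (fun j => norm_nonneg _) (fun j => ?_)
    (((h.add h2).div_const 2))
  rw [norm_mul]
  nlinarith [sq_nonneg (‖a j‖ - ‖a (k - j)‖), norm_nonneg (a j), norm_nonneg (a (k - j))]

lemma conv_norm_le {a : ℤ → ℂ} (h : Summable fun j => ‖a j‖ ^ 2) (k : ℤ) :
    ‖∑' j, a j * a (k - j)‖ ≤ ∑' j, ‖a j‖ ^ 2 := by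
  have h2 : Summable fun j => ‖a (k - j)‖ ^ 2 := by
    have := (Equiv.subLeft k).summable_iff.mpr h
    simpa [Equiv.subLeft, Function.comp_def] using this
  have hs := conv_summable h k
  have hmaj : Summable fun j => (‖a j‖ ^ 2 + ‖a (k - j)‖ ^ 2) / 2 := (h.add h2).div_const 2
  calc ‖∑' j, a j * a (k - j)‖ ≤ ∑' j, ‖a j * a (k - j)‖ := norm_tsum_le_tsum_norm hs
    _ ≤ ∑' j, (‖a j‖ ^ 2 + ‖a (k - j)‖ ^ 2) / 2 := by
        refine Summable.tsum_le_tsum (fun j => ?_) hs hmaj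
        rw [norm_mul]
        nlinarith [sq_nonneg (‖a j‖ - ‖a (k - j)‖), norm_nonneg (a j), norm_nonneg (a (k - j))]
    _ = ((∑' j, ‖a j‖ ^ 2) + ∑' j, ‖a (k - j)‖ ^ 2) / 2 := by
        rw [← Summable.tsum_add h h2, tsum_div_const]
    _ = ∑' j, ‖a j‖ ^ 2 := by
        have : (∑' j, ‖a (k - j)‖ ^ 2) = ∑' j, ‖a j‖ ^ 2 := by
          have := (Equiv.subLeft k).tsum_eq (fun j => ‖a j‖ ^ 2)
          simpa [Equiv.subLeft] using this
        rw [this]; ring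

lemma q_nonneg (k : ℤ) : 0 ≤ (k : ℝ) ^ 2 - |(k : ℝ)| := by
  rcases eq_or_ne k 0 with rfl | hk
  · simp
  · have h1 : (1 : ℝ) ≤ |(k : ℝ)| := by
      rw [← Int.cast_abs]
      exact_mod_cast Int.one_le_abs hk
    nlinarith [sq_abs (k : ℝ)]

lemma symbol_norm (β η r : ℝ) (k : ℤ) :
    ‖semigroupSymbol β η r k‖ = Real.exp (-(η * ((k : ℝ) ^ 2 - |(k : ℝ)|) * r)) := by
  rw [semigroupSymbol, Complex.norm_exp]
  congr 1
  simp only [Complex.mul_re, Complex.sub_re, Complex.mul_im, Complex.sub_im, Complex.I_re,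
    Complex.I_im, Complex.ofReal_re, Complex.ofReal_im]
  ring

lemma rpow_integrableOn {σ c : ℝ} (hσ : σ < 1) (hc : 0 ≤ c) :
    MeasureTheory.IntegrableOn (fun t : ℝ => t ^ (-σ)) (Set.Ioo 0 c) := by
  have h := intervalIntegral.intervalIntegrable_rpow' (a := 0) (b := c) (r := -σ)
    (by linarith)
  exact (intervalIntegrable_iff_integrableOn_Ioo_of_le hc).mp h

lemma rpow_integral_Ioo {σ c : ℝ} (hσ : σ < 1) (hc : 0 ≤ c) :
    ∫ t in Set.Ioo (0:ℝ) c, t ^ (-σ) = c ^ (1 - σ) / (1 - σ) := by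
  have h1 : ∫ t in (0:ℝ)..c, t ^ (-σ) = (c ^ (-σ + 1) - (0:ℝ) ^ (-σ + 1)) / (-σ + 1) :=
    integral_rpow (Or.inl (by linarith))
  rw [Real.zero_rpow (by linarith : -σ + 1 ≠ 0)] at h1
  have h2 : ∫ t in (0:ℝ)..c, t ^ (-σ) = ∫ t in Set.Ioo (0:ℝ) c, t ^ (-σ) := by
    rw [intervalIntegral.integral_of_le hc, MeasureTheory.integral_Ioc_eq_integral_Ioo]
  rw [← h2, h1]
  rw [show -σ + 1 = 1 - σ by ring]
  ring

lemma kernel_integrableOn {σ a τ : ℝ} (hσ1 : σ < 1) (ha : 0 ≤ a) (hτ : 0 < τ) :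
    MeasureTheory.IntegrableOn
      (fun t' : ℝ => Real.exp (-(a * (τ - t'))) * t' ^ (-σ)) (Set.Ioo 0 τ) := by
  refine Integrable.mono' (rpow_integrableOn hσ1 hτ.le) ?_ ?_
  · exact (by fun_prop :
      Measurable fun t' : ℝ => Real.exp (-(a * (τ - t'))) * t' ^ (-σ)).aestronglyMeasurable
  · filter_upwards [ae_restrict_mem measurableSet_Ioo] with t' ht'
    have h1 : Real.exp (-(a * (τ - t'))) ≤ 1 := by
      rw [Real.exp_le_one_iff]
      nlinarith [ht'.2]
    have h2 : (0:ℝ) ≤ t' ^ (-σ) := Real.rpow_nonneg ht'.1.le _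
    rw [Real.norm_eq_abs, abs_of_nonneg (by positivity)]
    nlinarith

lemma kernel_bound_small {σ a τ : ℝ} (hσ0 : 0 < σ) (hσ1 : σ < 1) (ha : 0 ≤ a)
    (hτ : 0 < τ) (hτ1 : τ ≤ 1) :
    ∫ t' in Set.Ioo (0:ℝ) τ, Real.exp (-(a * (τ - t'))) * t' ^ (-σ) ≤ 2 / (1 - σ) := by
  have h1 : ∫ t' in Set.Ioo (0:ℝ) τ, Real.exp (-(a * (τ - t'))) * t' ^ (-σ)
      ≤ ∫ t' in Set.Ioo (0:ℝ) τ, t' ^ (-σ) := by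
    refine MeasureTheory.setIntegral_mono_on (kernel_integrableOn hσ1 ha hτ)
      (rpow_integrableOn hσ1 hτ.le) measurableSet_Ioo (fun t' ht' => ?_)
    have h1 : Real.exp (-(a * (τ - t'))) ≤ 1 := by
      rw [Real.exp_le_one_iff]; nlinarith [ht'.2]
    have h2 : (0:ℝ) ≤ t' ^ (-σ) := Real.rpow_nonneg ht'.1.le _
    nlinarith [Real.exp_nonneg (-(a * (τ - t')))]
  rw [rpow_integral_Ioo hσ1 hτ.le] at h1
  have h2 : τ ^ (1 - σ) ≤ 1 := Real.rpow_le_one hτ.le hτ1 (by linarith)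
  have h3 : 0 < 1 - σ := by linarith
  calc ∫ t' in Set.Ioo (0:ℝ) τ, Real.exp (-(a * (τ - t'))) * t' ^ (-σ)
      ≤ τ ^ (1 - σ) / (1 - σ) := h1
    _ ≤ 1 / (1 - σ) := by gcongr
    _ ≤ 2 / (1 - σ) := by gcongr <;> norm_num

lemma exp_int_le {a c : ℝ} (ha : 0 < a) :
    ∫ x in (0:ℝ)..c, Real.exp (-(a * x)) ≤ 1 / a := by
  have h := intervalIntegral.integral_comp_mul_left (a := 0) (b := c) (f := Real.exp)
    (c := -a) (by linarith : (-a) ≠ 0)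
  have h2 : (∫ x in (0:ℝ)..c, Real.exp (-(a * x))) = ∫ x in (0:ℝ)..c, Real.exp (-a * x) := by
    simp [neg_mul]
  rw [h2, h, show -a * 0 = (0:ℝ) by ring, integral_exp]
  have he : 0 ≤ Real.exp (-a * c) := Real.exp_nonneg _
  have h3 : (-a)⁻¹ = -(a⁻¹) := inv_neg
  rw [smul_eq_mul, h3, Real.exp_zero]
  have hai : 0 < a⁻¹ := inv_pos.mpr ha
  calc -a⁻¹ * (Real.exp (-a * c) - 1) = a⁻¹ * (1 - Real.exp (-a * c)) := by ring
    _ ≤ a⁻¹ * 1 := by nlinarith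
    _ = 1 / a := by rw [mul_one, one_div]

lemma kernel_bound_main {σ a τ : ℝ} (hσ0 : 0 < σ) (hσ1 : σ < 1) (ha : 0 < a) (hτ : 0 < τ) :
    ∫ t' in Set.Ioo (0:ℝ) τ, Real.exp (-(a * (τ - t'))) * t' ^ (-σ)
      ≤ 2 / (1 - σ) * a ^ (σ - 1) := by
  have h1σ : 0 < 1 - σ := by linarith
  have hhalf : 0 < τ / 2 := by linarith
  set g : ℝ → ℝ := fun t' => Real.exp (-(a * (τ - t'))) * t' ^ (-σ) with hg
  have hsplit : Set.Ioo (0:ℝ) τ = Set.Ioo 0 (τ/2) ∪ Set.Ico (τ/2) τ :=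
    (Set.Ioo_union_Ico_eq_Ioo hhalf (by linarith)).symm
  have hint : MeasureTheory.IntegrableOn g (Set.Ioo 0 τ) := kernel_integrableOn hσ1 ha.le hτ
  have hint1 : MeasureTheory.IntegrableOn g (Set.Ioo 0 (τ/2)) :=
    hint.mono_set (by rw [hsplit]; exact Set.subset_union_left)
  have hint2 : MeasureTheory.IntegrableOn g (Set.Ico (τ/2) τ) :=
    hint.mono_set (by rw [hsplit]; exact Set.subset_union_right)
  have hdisj : Disjoint (Set.Ioo (0:ℝ) (τ/2)) (Set.Ico (τ/2) τ) := by
    apply Set.disjoint_left.mpr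
    rintro x ⟨_, h2⟩ ⟨h3, _⟩; linarith
  have heq : ∫ t' in Set.Ioo (0:ℝ) τ, g t' =
      (∫ t' in Set.Ioo (0:ℝ) (τ/2), g t') + ∫ t' in Set.Ico (τ/2) τ, g t' := by
    rw [hsplit]
    exact MeasureTheory.setIntegral_union hdisj measurableSet_Ico hint1 hint2
  have hP : 0 ≤ a ^ (σ - 1) := Real.rpow_nonneg ha.le _
  -- key pointwise estimate for the exponential weight
  have hKey : (τ/2) ^ (1-σ) * Real.exp (-(a * (τ/2))) ≤ a ^ (σ - 1) := by
    have k1 : (a * (τ/2)) ^ (1-σ) * Real.exp (-(a * (τ/2))) ≤ 1 :=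
      xpow_exp_le (by positivity) (by linarith) (by linarith)
    rw [Real.mul_rpow ha.le hhalf.le] at k1
    have hA : 0 < a ^ (1-σ) := Real.rpow_pos_of_pos ha _
    have hAi : a ^ (σ-1) = (a ^ (1-σ))⁻¹ := by
      rw [show σ - 1 = -(1-σ) by ring, Real.rpow_neg ha.le]
    rw [hAi]
    rw [mul_assoc] at k1
    have := mul_inv_cancel₀ hA.ne'
    nlinarith [inv_pos.mpr hA, mul_le_mul_of_nonneg_left k1 (inv_pos.mpr hA).le]
  -- I₁
  have hI1 : ∫ t' in Set.Ioo (0:ℝ) (τ/2), g t' ≤ a ^ (σ - 1) / (1 - σ) := by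
    have hmaj : MeasureTheory.IntegrableOn
        (fun t' : ℝ => Real.exp (-(a*(τ/2))) * t' ^ (-σ)) (Set.Ioo 0 (τ/2)) :=
      (rpow_integrableOn hσ1 hhalf.le).const_mul _
    have hb : ∀ t' ∈ Set.Ioo (0:ℝ) (τ/2), g t' ≤ Real.exp (-(a * (τ/2))) * t' ^ (-σ) := by
      intro t' ht'
      have h1 : Real.exp (-(a * (τ - t'))) ≤ Real.exp (-(a * (τ/2))) := by
        apply Real.exp_le_exp.mpr; nlinarith [ht'.2]
      exact mul_le_mul_of_nonneg_right h1 (Real.rpow_nonneg ht'.1.le _)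
    calc ∫ t' in Set.Ioo (0:ℝ) (τ/2), g t'
        ≤ ∫ t' in Set.Ioo (0:ℝ) (τ/2), Real.exp (-(a*(τ/2))) * t' ^ (-σ) :=
          MeasureTheory.setIntegral_mono_on hint1 hmaj measurableSet_Ioo hb
      _ = Real.exp (-(a*(τ/2))) * ∫ t' in Set.Ioo (0:ℝ) (τ/2), t' ^ (-σ) :=
          MeasureTheory.integral_const_mul _ _
      _ = Real.exp (-(a*(τ/2))) * ((τ/2) ^ (1-σ) / (1-σ)) := by
          rw [rpow_integral_Ioo hσ1 hhalf.le]
      _ = ((τ/2) ^ (1-σ) * Real.exp (-(a * (τ/2)))) / (1-σ) := by ring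
      _ ≤ a ^ (σ - 1) / (1 - σ) := by gcongr
  -- I₂
  have hone : MeasureTheory.IntegrableOn (fun _ : ℝ => (1:ℝ)) (Set.Ico (τ/2) τ) :=
    MeasureTheory.integrableOn_const
      (by rw [Real.volume_Ico]; exact ENNReal.ofReal_ne_top)
  have hJint : MeasureTheory.IntegrableOn
      (fun t' : ℝ => Real.exp (-(a * (τ - t')))) (Set.Ico (τ/2) τ) := by
    refine MeasureTheory.Integrable.mono' hone ?_ ?_
    · exact (by fun_prop :
        Measurable fun t' : ℝ => Real.exp (-(a * (τ - t')))).aestronglyMeasurable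
    · filter_upwards [MeasureTheory.ae_restrict_mem measurableSet_Ico] with t' ht'
      rw [Real.norm_eq_abs, abs_of_nonneg (Real.exp_nonneg _), Real.exp_le_one_iff]
      nlinarith [ht'.2]
  set J : ℝ := ∫ t' in Set.Ico (τ/2) τ, Real.exp (-(a * (τ - t'))) with hJ
  have hJ0 : 0 ≤ J := MeasureTheory.setIntegral_nonneg measurableSet_Ico
    (fun _ _ => Real.exp_nonneg _)
  have hJle1 : J ≤ τ/2 := by
    calc J ≤ ∫ _ in Set.Ico (τ/2) τ, (1:ℝ) := by
          refine MeasureTheory.setIntegral_mono_on hJint hone measurableSet_Ico ?_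
          intro t' ht'
          rw [Real.exp_le_one_iff]; nlinarith [ht'.2]
      _ = τ/2 := by
          rw [MeasureTheory.setIntegral_const, Real.volume_real_Ico, smul_eq_mul, mul_one,
            max_eq_left (by linarith)]
          ring
  have hJle2 : J ≤ 1/a := by
    have e1 : J = ∫ t' in (τ/2)..τ, Real.exp (-(a * (τ - t'))) := by
      rw [intervalIntegral.integral_of_le (by linarith),
        MeasureTheory.integral_Ioc_eq_integral_Ioo]
      rw [hJ, MeasureTheory.integral_Ico_eq_integral_Ioo]
    have e2 : (∫ t' in (τ/2)..τ, Real.exp (-(a * (τ - t'))))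
        = ∫ x in (τ - τ)..(τ - τ/2), Real.exp (-(a * x)) :=
      intervalIntegral.integral_comp_sub_left (fun r => Real.exp (-(a * r))) τ
    rw [e1, e2, show τ - τ = 0 by ring, show τ - τ/2 = τ/2 by ring]
    exact exp_int_le ha
  have hI2 : ∫ t' in Set.Ico (τ/2) τ, g t' ≤ a ^ (σ - 1) := by
    have step1 : ∫ t' in Set.Ico (τ/2) τ, g t'
        ≤ ∫ t' in Set.Ico (τ/2) τ, (τ/2) ^ (-σ) * Real.exp (-(a * (τ - t'))) := by
      refine MeasureTheory.setIntegral_mono_on hint2 (hJint.const_mul _)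
        measurableSet_Ico (fun t' ht' => ?_)
      have h1 : t' ^ (-σ) ≤ (τ/2) ^ (-σ) :=
        Real.rpow_le_rpow_of_nonpos hhalf ht'.1 (by linarith)
      calc g t' = Real.exp (-(a * (τ - t'))) * t' ^ (-σ) := rfl
        _ ≤ Real.exp (-(a * (τ - t'))) * (τ/2) ^ (-σ) :=
            mul_le_mul_of_nonneg_left h1 (Real.exp_nonneg _)
        _ = (τ/2) ^ (-σ) * Real.exp (-(a * (τ - t'))) := by ring
    rw [MeasureTheory.integral_const_mul] at step1
    have hC : 0 ≤ (τ/2) ^ (-σ) := Real.rpow_nonneg hhalf.le _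
    rcases le_total (τ/2) (1/a) with hcase | hcase
    · have b1 : (τ/2) ^ (-σ) * J ≤ (τ/2) ^ (-σ) * (τ/2) :=
        mul_le_mul_of_nonneg_left hJle1 hC
      have b2 : (τ/2) ^ (-σ) * (τ/2) = (τ/2) ^ (1-σ) := by
        rw [show (1:ℝ) - σ = -σ + 1 by ring, Real.rpow_add hhalf, Real.rpow_one]
      have b3 : (τ/2) ^ (1-σ) ≤ (1/a) ^ (1-σ) :=
        Real.rpow_le_rpow hhalf.le hcase (by linarith)
      have b4 : (1/a) ^ ((1:ℝ)-σ) = a ^ (σ-1) := by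
        rw [one_div, Real.inv_rpow ha.le, ← Real.rpow_neg ha.le]
        congr 1; ring
      calc ∫ t' in Set.Ico (τ/2) τ, g t' ≤ (τ/2) ^ (-σ) * J := step1
        _ ≤ (τ/2) ^ (1-σ) := by rw [← b2]; exact b1
        _ ≤ (1/a) ^ (1-σ) := b3
        _ = a ^ (σ-1) := b4
    · have hia : 0 < 1/a := by positivity
      have b1 : (τ/2) ^ (-σ) ≤ (1/a) ^ (-σ) :=
        Real.rpow_le_rpow_of_nonpos hia hcase (by linarith)
      have b2 : (τ/2) ^ (-σ) * J ≤ (1/a) ^ (-σ) * (1/a) :=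
        mul_le_mul b1 hJle2 hJ0 (Real.rpow_nonneg hia.le _)
      have b3 : (1/a) ^ (-σ) * (1/a) = (1/a) ^ (1-σ) := by
        rw [show (1:ℝ) - σ = -σ + 1 by ring, Real.rpow_add hia, Real.rpow_one]
      have b4 : (1/a) ^ ((1:ℝ)-σ) = a ^ (σ-1) := by
        rw [one_div, Real.inv_rpow ha.le, ← Real.rpow_neg ha.le]
        congr 1; ring
      calc ∫ t' in Set.Ico (τ/2) τ, g t' ≤ (τ/2) ^ (-σ) * J := step1
        _ ≤ (1/a) ^ (-σ) * (1/a) := b2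
        _ = a ^ (σ-1) := by rw [b3, b4]
  -- combine
  have hfin : a ^ (σ-1) / (1-σ) + a ^ (σ-1) ≤ 2 / (1-σ) * a ^ (σ-1) := by
    rw [div_add' _ _ _ h1σ.ne', div_le_iff₀ h1σ, mul_assoc, mul_comm (a ^ (σ-1)) (1-σ),
      ← mul_assoc, div_mul_cancel₀ _ h1σ.ne']
    nlinarith
  calc ∫ t' in Set.Ioo (0:ℝ) τ, g t'
      = (∫ t' in Set.Ioo (0:ℝ) (τ/2), g t') + ∫ t' in Set.Ico (τ/2) τ, g t' := heq
    _ ≤ a ^ (σ-1) / (1-σ) + a ^ (σ-1) := add_le_add hI1 hI2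
    _ ≤ 2 / (1-σ) * a ^ (σ-1) := hfin

lemma weight_le {r : ℝ} (hr : r ≤ 1) {k : ℤ} (hk : k ≠ 0) :
    (1 + (k:ℝ)^2) ^ r ≤ 2 * ((k:ℝ)^2) ^ r := by
  have hk1 : (1:ℝ) ≤ (k:ℝ)^2 := by
    have : (1:ℝ) ≤ |(k:ℝ)| := by
      rw [← Int.cast_abs]; exact_mod_cast Int.one_le_abs hk
    nlinarith [sq_abs (k:ℝ)]
  have hkpos : (0:ℝ) < (k:ℝ)^2 := by linarith
  rcases le_or_gt 0 r with hr0 | hr0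
  · have h1 : (1 + (k:ℝ)^2) ^ r ≤ (2 * (k:ℝ)^2) ^ r :=
      Real.rpow_le_rpow (by positivity) (by linarith) hr0
    have h2 : (2 * (k:ℝ)^2) ^ r = 2 ^ r * ((k:ℝ)^2) ^ r :=
      Real.mul_rpow (by norm_num) (by positivity)
    have h3 : (2:ℝ) ^ r ≤ 2 ^ (1:ℝ) := Real.rpow_le_rpow_of_exponent_le (by norm_num) hr
    rw [Real.rpow_one] at h3
    have h4 : (0:ℝ) ≤ ((k:ℝ)^2) ^ r := Real.rpow_nonneg (by positivity) _
    calc (1 + (k:ℝ)^2) ^ r ≤ 2 ^ r * ((k:ℝ)^2) ^ r := by rw [← h2]; exact h1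
      _ ≤ 2 * ((k:ℝ)^2) ^ r := mul_le_mul_of_nonneg_right h3 h4
  · have h1 : (1 + (k:ℝ)^2) ^ r ≤ ((k:ℝ)^2) ^ r :=
      Real.rpow_le_rpow_of_nonpos hkpos (by linarith) hr0.le
    have h4 : (0:ℝ) ≤ ((k:ℝ)^2) ^ r := Real.rpow_nonneg (by positivity) _
    linarith

set_option maxHeartbeats 2000000 in
/-- Let η > 0, s ∈ (−1/2, 0), δ ∈ [0, s + 1/2), 0 < T ≤ 1. If
`u : (0,T] → L²(𝕋)` satisfies `sup_{t∈(0,T]} (‖u(t)‖_{H^s} + t^{|s|/2}‖u(t)‖_{L²}) < ∞`,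
then `t ↦ ∫_0^t S(t−t') ∂ₓ(u(t')²) dt'` is continuous from [0,T] into H^{s+δ}(𝕋). -/
theorem stmt19 (β η s δ T : ℝ) (hη : 0 < η) (hs : s ∈ Set.Ioo (-(1/2) : ℝ) 0)
    (hδ : δ ∈ Set.Ico (0:ℝ) (s + 1/2)) (hT0 : 0 < T) (hT1 : T ≤ 1)
    (u : ℝ → ℤ → ℂ)
    (hmeas : ∀ k : ℤ, Measurable fun t : ℝ => u t k)
    (hL2 : ∀ t ∈ Set.Ioc (0:ℝ) T, Summable fun k : ℤ => ‖u t k‖ ^ 2)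
    (hbdd : ∃ M : ℝ, ∀ t ∈ Set.Ioc (0:ℝ) T,
      hsNorm s (u t) + t ^ (|s| / 2) * l2Norm (u t) ≤ M) :
    ∀ t ∈ Set.Icc (0:ℝ) T, ∀ ε > (0:ℝ), ∃ ρ > (0:ℝ), ∀ τ ∈ Set.Icc (0:ℝ) T,
      |τ - t| < ρ →
        hsNorm (s + δ) (fun k => duhamelSq β η u τ k - duhamelSq β η u t k) < ε := by
  obtain ⟨M, hM⟩ := hbdd
  intro t ht ε hε
  obtain ⟨hs1, hs2⟩ := hs
  obtain ⟨hδ0, hδ1⟩ := hδ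
  set σ : ℝ := -s with hσdef
  have hσ0 : 0 < σ := by simp only [hσdef]; linarith
  have hσ1 : σ < 1 := by simp only [hσdef]; linarith
  have habs : |s| = σ := abs_of_neg hs2
  have hπ : 0 < Real.pi := Real.pi_pos
  set K0 : ℝ := M ^ 2 / (2 * Real.pi) with hK0
  have hK0nn : 0 ≤ K0 := by positivity
  set cf : ℝ → ℤ → ℂ :=
    fun t' k => Complex.I * ((k:ℝ) : ℂ) * ∑' j : ℤ, u t' j * u t' (k - j) with hcf
  have hdsq : ∀ τ (k : ℤ), duhamelSq β η u τ k =
      ∫ t' in Set.Ioo (0:ℝ) τ, semigroupSymbol β η (τ - t') k * cf t' k := fun τ k => rfl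
  -- bound on the ℓ² norm squared
  have hPbound : ∀ t' ∈ Set.Ioc (0:ℝ) T, (∑' j : ℤ, ‖u t' j‖ ^ 2) ≤ K0 * t' ^ (-σ) := by
    intro t' ht'
    have ht'0 : 0 < t' := ht'.1
    have h1 := hM t' ht'
    have h2 : 0 ≤ hsNorm s (u t') := Real.sqrt_nonneg _
    have hw : 0 < t' ^ (|s| / 2) := Real.rpow_pos_of_pos ht'0 _
    have h3 : l2Norm (u t') ≤ M / t' ^ (|s| / 2) := by
      rw [le_div_iff₀ hw]
      nlinarith [h1, h2]
    have hMnn : 0 ≤ M := by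
      have h4 := hM T ⟨hT0, le_refl T⟩
      have h5 : 0 ≤ hsNorm s (u T) := Real.sqrt_nonneg _
      have h6 : 0 ≤ l2Norm (u T) := Real.sqrt_nonneg _
      have h7 : 0 ≤ T ^ (|s| / 2) := Real.rpow_nonneg hT0.le _
      nlinarith
    have hPnn : 0 ≤ ∑' j : ℤ, ‖u t' j‖ ^ 2 :=
      tsum_nonneg (fun j => sq_nonneg _)
    have h5 : 2 * Real.pi * (∑' j : ℤ, ‖u t' j‖ ^ 2) ≤ (M / t' ^ (|s| / 2)) ^ 2 := by
      have := Real.sq_sqrt (by positivity : (0:ℝ) ≤ 2 * Real.pi * ∑' j : ℤ, ‖u t' j‖ ^ 2)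
      rw [← this]
      exact pow_le_pow_left₀ (Real.sqrt_nonneg _) h3 2
    have hw2 : (t' ^ (|s| / 2)) ^ 2 = t' ^ σ := by
      rw [sq, ← Real.rpow_add ht'0]
      congr 1
      rw [habs]; ring
    have h6 : (M / t' ^ (|s| / 2)) ^ 2 = M ^ 2 / t' ^ σ := by
      rw [div_pow, hw2]
    have h7 : t' ^ (-σ) = (t' ^ σ)⁻¹ := Real.rpow_neg ht'0.le σ
    have h8 : 0 < t' ^ σ := Real.rpow_pos_of_pos ht'0 _
    rw [hK0, h7, div_mul_eq_mul_div, le_div_iff₀ (by positivity : (0:ℝ) < 2 * Real.pi)]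
    rw [h6, div_eq_mul_inv] at h5
    calc (∑' j : ℤ, ‖u t' j‖ ^ 2) * (2 * Real.pi)
        = 2 * Real.pi * (∑' j : ℤ, ‖u t' j‖ ^ 2) := by ring
      _ ≤ M ^ 2 * (t' ^ σ)⁻¹ := h5
  -- norm bound on the convolution coefficient
  have hcknorm : ∀ (k : ℤ), ∀ t' ∈ Set.Ioc (0:ℝ) T,
      ‖cf t' k‖ ≤ |(k:ℝ)| * K0 * t' ^ (-σ) := by
    intro k t' ht'
    rw [hcf]
    simp only []
    rw [norm_mul, norm_mul, Complex.norm_I, one_mul, Complex.norm_real, Real.norm_eq_abs]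
    have h1 : ‖∑' j : ℤ, u t' j * u t' (k - j)‖ ≤ K0 * t' ^ (-σ) :=
      (conv_norm_le (hL2 t' ht') k).trans (hPbound t' ht')
    calc |(k:ℝ)| * ‖∑' j : ℤ, u t' j * u t' (k - j)‖
        ≤ |(k:ℝ)| * (K0 * t' ^ (-σ)) := mul_le_mul_of_nonneg_left h1 (abs_nonneg _)
      _ = |(k:ℝ)| * K0 * t' ^ (-σ) := by ring
  -- strong measurability of the convolution coefficient
  have hckAESM : ∀ k : ℤ, MeasureTheory.AEStronglyMeasurable (fun t' => cf t' k)
      (MeasureTheory.volume.restrict (Set.Ioo (0:ℝ) T)) := by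
    intro k
    refine aestronglyMeasurable_of_tendsto_ae (atTop : Filter (Finset ℤ))
      (f := fun (n : Finset ℤ) (t' : ℝ) =>
        Complex.I * ((k:ℝ) : ℂ) * ∑ j ∈ n, u t' j * u t' (k - j)) (fun n => ?_) ?_
    · exact (measurable_const.mul
        (Finset.measurable_sum n (fun j _ => (hmeas j).mul (hmeas (k - j))))).aestronglyMeasurable
    · filter_upwards [MeasureTheory.ae_restrict_mem measurableSet_Ioo] with t' ht'
      have hsum : Summable fun j : ℤ => u t' j * u t' (k - j) :=
        Summable.of_norm (conv_summable (hL2 t' ⟨ht'.1, ht'.2.le⟩) k)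
      exact (hsum.hasSum.const_smul (Complex.I * ((k:ℝ) : ℂ))).congr (fun n => by
        simp [smul_eq_mul, Finset.mul_sum])
  -- continuity of the symbol in the time variable
  have hsymc : ∀ (k : ℤ) (t0 : ℝ), Continuous fun τ : ℝ => semigroupSymbol β η (τ - t0) k := by
    intro k t0
    unfold semigroupSymbol
    fun_prop
  have hsymc' : ∀ (k : ℤ) (τ : ℝ), Continuous fun t' : ℝ => semigroupSymbol β η (τ - t') k := by
    intro k τ
    unfold semigroupSymbol
    fun_prop
  have hsymle : ∀ (k : ℤ) {r : ℝ}, 0 ≤ r → ‖semigroupSymbol β η r k‖ ≤ 1 := by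
    intro k r hr
    rw [symbol_norm, Real.exp_le_one_iff]
    have h := q_nonneg k
    nlinarith [mul_nonneg (mul_nonneg hη.le h) hr]
  -- integrability of the Duhamel integrand
  have hIntOn : ∀ (k : ℤ), ∀ τ ∈ Set.Ioc (0:ℝ) T, MeasureTheory.IntegrableOn
      (fun t' => semigroupSymbol β η (τ - t') k * cf t' k) (Set.Ioo 0 τ) := by
    intro k τ hτ
    refine MeasureTheory.Integrable.mono'
      (g := fun t' => |(k:ℝ)| * K0 * t' ^ (-σ))
      (((rpow_integrableOn hσ1 hτ.1.le).const_mul (|(k:ℝ)| * K0))) ?_ ?_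
    · exact ((hsymc' k τ).aestronglyMeasurable).mul
        (((hckAESM k).mono_measure
          (MeasureTheory.Measure.restrict_mono (Set.Ioo_subset_Ioo_right hτ.2) le_rfl)))
    · filter_upwards [MeasureTheory.ae_restrict_mem measurableSet_Ioo] with t' ht'
      rw [norm_mul]
      have h1 : ‖semigroupSymbol β η (τ - t') k‖ ≤ 1 := hsymle k (by linarith [ht'.2])
      have h2 := hcknorm k t' ⟨ht'.1, ht'.2.le.trans hτ.2⟩
      have h3 : (0:ℝ) ≤ |(k:ℝ)| * K0 * t' ^ (-σ) := by
        have := Real.rpow_nonneg ht'.1.le (-σ); positivity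
      nlinarith [norm_nonneg (cf t' k), norm_nonneg (semigroupSymbol β η (τ - t') k)]
  -- the uniform coefficient bound
  set m : ℤ → ℝ := fun k =>
    if 2 ≤ |k| then (η * ((k:ℝ) ^ 2 - |(k:ℝ)|)) ^ (σ - 1) else 1 with hm
  have hmnn : ∀ k, 0 ≤ m k := by
    intro k
    rw [hm]
    dsimp only
    split
    · exact Real.rpow_nonneg (mul_nonneg hη.le (q_nonneg k)) _
    · norm_num
  set bnd : ℤ → ℝ := fun k => |(k:ℝ)| * K0 * (2 / (1 - σ)) * m k with hbnd
  have hbndnn : ∀ k, 0 ≤ bnd k := by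
    intro k
    rw [hbnd]
    have h1 := hmnn k
    have h2 : (0:ℝ) ≤ 2 / (1 - σ) := by
      apply div_nonneg (by norm_num); linarith
    positivity
  have hFbnd : ∀ (k : ℤ), ∀ τ ∈ Set.Icc (0:ℝ) T, ‖duhamelSq β η u τ k‖ ≤ bnd k := by
    intro k τ hτ
    rcases eq_or_lt_of_le hτ.1 with h0 | h0
    · rw [hdsq, ← h0]
      simp [Set.Ioo_self]
      exact hbndnn k
    · have hτT : τ ∈ Set.Ioc (0:ℝ) T := ⟨h0, hτ.2⟩
      have hker : (∫ t' in Set.Ioo (0:ℝ) τ,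
          Real.exp (-(η * ((k:ℝ) ^ 2 - |(k:ℝ)|) * (τ - t'))) * t' ^ (-σ))
          ≤ (2 / (1 - σ)) * m k := by
        rw [hm]
        dsimp only
        split
        next h2 =>
          have hA : (2:ℝ) ≤ |(k:ℝ)| := by
            rw [← Int.cast_abs]; exact_mod_cast h2
          have hq : (0:ℝ) < η * ((k:ℝ) ^ 2 - |(k:ℝ)|) := by
            have h3 := sq_abs (k:ℝ)
            have hq0 : (0:ℝ) < (k:ℝ) ^ 2 - |(k:ℝ)| := by nlinarith
            exact mul_pos hη hq0
          exact kernel_bound_main hσ0 hσ1 hq h0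
        next h2 =>
          have := kernel_bound_small hσ0 hσ1
            (mul_nonneg hη.le (q_nonneg k)) h0 (hτ.2.trans hT1)
          calc _ ≤ 2 / (1 - σ) := this
            _ = 2 / (1 - σ) * 1 := by ring
      rw [hdsq]
      calc ‖∫ t' in Set.Ioo (0:ℝ) τ, semigroupSymbol β η (τ - t') k * cf t' k‖
          ≤ ∫ t' in Set.Ioo (0:ℝ) τ, ‖semigroupSymbol β η (τ - t') k * cf t' k‖ :=
            MeasureTheory.norm_integral_le_integral_norm _
        _ ≤ ∫ t' in Set.Ioo (0:ℝ) τ, (|(k:ℝ)| * K0) *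
              (Real.exp (-(η * ((k:ℝ) ^ 2 - |(k:ℝ)|) * (τ - t'))) * t' ^ (-σ)) := by
            refine MeasureTheory.setIntegral_mono_on ((hIntOn k τ hτT).norm)
              ((kernel_integrableOn hσ1 (mul_nonneg hη.le (q_nonneg k)) h0).const_mul
                (|(k:ℝ)| * K0)) measurableSet_Ioo (fun t' ht' => ?_)
            rw [norm_mul, symbol_norm]
            have h2 := hcknorm k t' ⟨ht'.1, ht'.2.le.trans hτ.2⟩
            have hexp : (0:ℝ) ≤ Real.exp (-(η * ((k:ℝ) ^ 2 - |(k:ℝ)|) * (τ - t'))) :=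
              Real.exp_nonneg _
            calc Real.exp (-(η * ((k:ℝ) ^ 2 - |(k:ℝ)|) * (τ - t'))) * ‖cf t' k‖
                ≤ Real.exp (-(η * ((k:ℝ) ^ 2 - |(k:ℝ)|) * (τ - t'))) *
                  (|(k:ℝ)| * K0 * t' ^ (-σ)) := mul_le_mul_of_nonneg_left h2 hexp
              _ = (|(k:ℝ)| * K0) *
                  (Real.exp (-(η * ((k:ℝ) ^ 2 - |(k:ℝ)|) * (τ - t'))) * t' ^ (-σ)) := by ring
        _ = (|(k:ℝ)| * K0) * ∫ t' in Set.Ioo (0:ℝ) τ,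
              Real.exp (-(η * ((k:ℝ) ^ 2 - |(k:ℝ)|) * (τ - t'))) * t' ^ (-σ) :=
            MeasureTheory.integral_const_mul _ _
        _ ≤ (|(k:ℝ)| * K0) * ((2 / (1 - σ)) * m k) := by
            refine mul_le_mul_of_nonneg_left hker (by positivity)
        _ = bnd k := by rw [hbnd]; ring
  -- continuity of each Fourier coefficient in time
  have hlne : Filter.NeBot (nhdsWithin t (Set.Icc (0:ℝ) T)) := nhdsWithin_neBot_of_mem ht
  have hFcont : ∀ k : ℤ, Filter.Tendsto (fun τ => duhamelSq β η u τ k)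
      (nhdsWithin t (Set.Icc (0:ℝ) T)) (nhds (duhamelSq β η u t k)) := by
    intro k
    set l := nhdsWithin t (Set.Icc (0:ℝ) T) with hl
    set G : ℝ → ℝ → ℂ := fun τ x =>
      (Set.Ioo (0:ℝ) τ).indicator (fun x => semigroupSymbol β η (τ - x) k * cf x k) x with hG
    have hGint : ∀ τ ∈ Set.Icc (0:ℝ) T,
        (∫ t' in Set.Ioo (0:ℝ) T, G τ t') = duhamelSq β η u τ k := by
      intro τ hτ
      rw [hG]
      rw [MeasureTheory.setIntegral_indicator measurableSet_Ioo,
        Set.inter_eq_self_of_subset_right (Set.Ioo_subset_Ioo_right hτ.2), hdsq]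
    have key : Filter.Tendsto (fun τ => ∫ t' in Set.Ioo (0:ℝ) T, G τ t') l
        (nhds (∫ t' in Set.Ioo (0:ℝ) T, G t t')) := by
      refine MeasureTheory.tendsto_integral_filter_of_dominated_convergence
        (bound := fun t' => |(k:ℝ)| * K0 * t' ^ (-σ)) ?_ ?_ ?_ ?_
      · filter_upwards with τ
        exact (((hsymc' k τ).aestronglyMeasurable).mul (hckAESM k)).indicator measurableSet_Ioo
      · filter_upwards [self_mem_nhdsWithin] with τ hτ
        filter_upwards [MeasureTheory.ae_restrict_mem measurableSet_Ioo] with t' ht'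
        by_cases ht'' : t' ∈ Set.Ioo (0:ℝ) τ
        · have hval : G τ t' = semigroupSymbol β η (τ - t') k * cf t' k :=
            Set.indicator_of_mem ht'' _
          rw [hval, norm_mul]
          have h1 : ‖semigroupSymbol β η (τ - t') k‖ ≤ 1 := hsymle k (by linarith [ht''.2])
          have h2 := hcknorm k t' ⟨ht'.1, ht'.2.le⟩
          have h3 : (0:ℝ) ≤ |(k:ℝ)| * K0 * t' ^ (-σ) := by
            have := Real.rpow_nonneg ht'.1.le (-σ); positivity
          nlinarith [norm_nonneg (cf t' k), norm_nonneg (semigroupSymbol β η (τ - t') k)]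
        · have hval : G τ t' = 0 := Set.indicator_of_notMem ht'' _
          rw [hval, norm_zero]
          have := Real.rpow_nonneg ht'.1.le (-σ); positivity
      · exact (rpow_integrableOn hσ1 hT0.le).const_mul (|(k:ℝ)| * K0)
      · have hne : ∀ᵐ t' ∂(MeasureTheory.volume.restrict (Set.Ioo (0:ℝ) T)), t' ≠ t := by
          refine MeasureTheory.ae_restrict_of_ae ?_
          rw [MeasureTheory.ae_iff]
          have : {a : ℝ | ¬a ≠ t} = {t} := by ext x; simp
          rw [this]
          exact MeasureTheory.measure_singleton t
        filter_upwards [hne, MeasureTheory.ae_restrict_mem measurableSet_Ioo] with t' hne' ht'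
        rcases lt_or_gt_of_ne hne' with hlt | hgt
        · have hmem : t' ∈ Set.Ioo (0:ℝ) t := ⟨ht'.1, hlt⟩
          have hev : ∀ᶠ τ in l, G τ t' = semigroupSymbol β η (τ - t') k * cf t' k := by
            filter_upwards [mem_nhdsWithin_of_mem_nhds (Ioi_mem_nhds hlt)] with τ hτ
            exact Set.indicator_of_mem
              (show t' ∈ Set.Ioo (0:ℝ) τ from ⟨ht'.1, Set.mem_Ioi.mp hτ⟩) _
          have hcont : Filter.Tendsto (fun τ => semigroupSymbol β η (τ - t') k * cf t' k) l
              (nhds (semigroupSymbol β η (t - t') k * cf t' k)) :=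
            (((hsymc k t').tendsto t).mono_left nhdsWithin_le_nhds).mul_const _
          have hGt : G t t' = semigroupSymbol β η (t - t') k * cf t' k :=
            Set.indicator_of_mem hmem _

          rw [hGt]
          exact hcont.congr' (by filter_upwards [hev] with τ h using h.symm)
        · have hev : ∀ᶠ τ in l, G τ t' = 0 := by
            filter_upwards [mem_nhdsWithin_of_mem_nhds (Iio_mem_nhds hgt)] with τ hτ
            exact Set.indicator_of_notMem
              (fun hmem => absurd hmem.2 (not_lt.mpr (Set.mem_Iio.mp hτ).le)) _
          have hGt : G t t' = 0 :=
            Set.indicator_of_notMem (fun hmem => absurd hmem.2 (not_lt.mpr hgt.le)) _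
          rw [hGt]
          exact tendsto_const_nhds.congr' (by filter_upwards [hev] with τ h using h.symm)
    rw [hGint t ht] at key
    refine key.congr' ?_
    filter_upwards [self_mem_nhdsWithin] with τ hτ using hGint τ hτ
  -- the dominating summable sequence
  set w : ℤ → ℝ := fun k => (1 + (k:ℝ) ^ 2) ^ (s + δ) with hw
  have hwnn : ∀ k, 0 ≤ w k := fun k => Real.rpow_nonneg (by positivity) _
  set B : ℤ → ℝ := fun k => w k * (2 * bnd k) ^ 2 with hB
  have hBnn : ∀ k, 0 ≤ B k := fun k => mul_nonneg (hwnn k) (sq_nonneg _)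
  set p : ℝ := 2 + 2 * s - 2 * δ with hp
  have hp1 : 1 < p := by rw [hp]; linarith
  set C1 : ℝ := K0 * (2 / (1 - σ)) * (η / 2) ^ (σ - 1) with hC1
  have h2σ : (0:ℝ) ≤ 2 / (1 - σ) := div_nonneg (by norm_num) (by linarith)
  have hη2 : (0:ℝ) ≤ (η / 2) ^ (σ - 1) := Real.rpow_nonneg (by positivity) _
  have hC1nn : 0 ≤ C1 := by rw [hC1]; positivity
  set CC : ℝ := max (max (B 1) (B (-1))) (8 * C1 ^ 2) with hCC
  have hcmp : ∀ k : ℤ, B k ≤ CC * (1 / |(k:ℝ)| ^ p) := by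
    intro k
    by_cases h2 : 2 ≤ |k|
    · have hA : (2:ℝ) ≤ |(k:ℝ)| := by rw [← Int.cast_abs]; exact_mod_cast h2
      have hA0 : (0:ℝ) < |(k:ℝ)| := by linarith
      have hk0 : k ≠ 0 := by intro h; rw [h] at h2; norm_num at h2
      have hsqabs : (k:ℝ) ^ 2 = |(k:ℝ)| ^ 2 := (sq_abs _).symm
      -- step 1 : bnd k ≤ C1 * |k| ^ (2σ - 1)
      have hbnd_le : bnd k ≤ C1 * |(k:ℝ)| ^ (2 * σ - 1) := by
        have hmk : m k = (η * ((k:ℝ) ^ 2 - |(k:ℝ)|)) ^ (σ - 1) := by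
          rw [hm]; exact if_pos h2
        have hq2 : η * (|(k:ℝ)| ^ 2 / 2) ≤ η * ((k:ℝ) ^ 2 - |(k:ℝ)|) := by
          rw [hsqabs]
          have base : |(k:ℝ)| ^ 2 / 2 ≤ |(k:ℝ)| ^ 2 - |(k:ℝ)| := by nlinarith
          exact mul_le_mul_of_nonneg_left base hη.le
        have hqpos : (0:ℝ) < η * (|(k:ℝ)| ^ 2 / 2) := by positivity
        have hmle : m k ≤ (η * (|(k:ℝ)| ^ 2 / 2)) ^ (σ - 1) := by
          rw [hmk]
          exact Real.rpow_le_rpow_of_nonpos hqpos hq2 (by linarith)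
        have hsplit : (η * (|(k:ℝ)| ^ 2 / 2)) ^ (σ - 1)
            = (η / 2) ^ (σ - 1) * (|(k:ℝ)| ^ 2) ^ (σ - 1) := by
          rw [show η * (|(k:ℝ)| ^ 2 / 2) = (η / 2) * |(k:ℝ)| ^ 2 by ring,
            Real.mul_rpow (by positivity) (by positivity)]
        have hpow2 : (|(k:ℝ)| ^ 2) ^ (σ - 1) = |(k:ℝ)| ^ (2 * (σ - 1)) := by
          rw [← Real.rpow_natCast |(k:ℝ)| 2, ← Real.rpow_mul (abs_nonneg _)]
          norm_num
        have hcomb : |(k:ℝ)| * |(k:ℝ)| ^ (2 * (σ - 1)) = |(k:ℝ)| ^ (2 * σ - 1) := by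
          nth_rewrite 1 [← Real.rpow_one |(k:ℝ)|]
          rw [← Real.rpow_add hA0]
          congr 1; ring
        calc bnd k = |(k:ℝ)| * K0 * (2 / (1 - σ)) * m k := by rw [hbnd]
          _ ≤ |(k:ℝ)| * K0 * (2 / (1 - σ)) *
              ((η / 2) ^ (σ - 1) * (|(k:ℝ)| ^ 2) ^ (σ - 1)) := by
            rw [← hsplit]
            exact mul_le_mul_of_nonneg_left hmle (by positivity)
          _ = C1 * (|(k:ℝ)| * |(k:ℝ)| ^ (2 * (σ - 1))) := by
            rw [hC1, hpow2]; ring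
          _ = C1 * |(k:ℝ)| ^ (2 * σ - 1) := by rw [hcomb]
      -- step 2 : weight bound
      have hwk : w k ≤ 2 * |(k:ℝ)| ^ (2 * (s + δ)) := by
        have h1 : w k ≤ 2 * ((k:ℝ) ^ 2) ^ (s + δ) := weight_le (by linarith) hk0
        have h2' : ((k:ℝ) ^ 2) ^ (s + δ) = |(k:ℝ)| ^ (2 * (s + δ)) := by
          rw [hsqabs, ← Real.rpow_natCast |(k:ℝ)| 2, ← Real.rpow_mul (abs_nonneg _)]
          norm_num
        rw [← h2']; exact h1
      -- combine
      have hX : (0:ℝ) ≤ |(k:ℝ)| ^ (2 * σ - 1) := Real.rpow_nonneg (abs_nonneg _) _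
      have hsq2 : (2 * bnd k) ^ 2 ≤ 4 * C1 ^ 2 * (|(k:ℝ)| ^ (2 * σ - 1)) ^ 2 := by
        have h1 : 2 * bnd k ≤ 2 * (C1 * |(k:ℝ)| ^ (2 * σ - 1)) :=
          mul_le_mul_of_nonneg_left hbnd_le (by norm_num)
        have h2' := pow_le_pow_left₀ (by linarith [hbndnn k] : (0:ℝ) ≤ 2 * bnd k) h1 2
        calc (2 * bnd k) ^ 2 ≤ (2 * (C1 * |(k:ℝ)| ^ (2 * σ - 1))) ^ 2 := h2'
          _ = 4 * C1 ^ 2 * (|(k:ℝ)| ^ (2 * σ - 1)) ^ 2 := by ring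
      have hXsq : (|(k:ℝ)| ^ (2 * σ - 1)) ^ 2 = |(k:ℝ)| ^ (4 * σ - 2) := by
        rw [sq, ← Real.rpow_add hA0]; congr 1; ring
      have hfinal : B k ≤ 8 * C1 ^ 2 * |(k:ℝ)| ^ (-p) := by
        have h1 : B k ≤ (2 * |(k:ℝ)| ^ (2 * (s + δ))) *
            (4 * C1 ^ 2 * (|(k:ℝ)| ^ (2 * σ - 1)) ^ 2) := by
          rw [hB]
          exact mul_le_mul hwk hsq2 (sq_nonneg _) (by positivity)
        have h2' : |(k:ℝ)| ^ (2 * (s + δ)) * |(k:ℝ)| ^ (4 * σ - 2) = |(k:ℝ)| ^ (-p) := by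
          rw [← Real.rpow_add hA0]
          congr 1
          rw [hp, hσdef]; ring
        calc B k ≤ (2 * |(k:ℝ)| ^ (2 * (s + δ))) *
            (4 * C1 ^ 2 * (|(k:ℝ)| ^ (2 * σ - 1)) ^ 2) := h1
          _ = 8 * C1 ^ 2 * (|(k:ℝ)| ^ (2 * (s + δ)) * |(k:ℝ)| ^ (4 * σ - 2)) := by
            rw [hXsq]; ring
          _ = 8 * C1 ^ 2 * |(k:ℝ)| ^ (-p) := by rw [h2']
      have hrpn : |(k:ℝ)| ^ (-p) = 1 / |(k:ℝ)| ^ p := by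
        rw [Real.rpow_neg (abs_nonneg _), one_div]
      have hnn : (0:ℝ) ≤ 1 / |(k:ℝ)| ^ p := by positivity
      calc B k ≤ 8 * C1 ^ 2 * |(k:ℝ)| ^ (-p) := hfinal
        _ = 8 * C1 ^ 2 * (1 / |(k:ℝ)| ^ p) := by rw [hrpn]
        _ ≤ CC * (1 / |(k:ℝ)| ^ p) :=
          mul_le_mul_of_nonneg_right (le_max_right _ _) hnn
    · have h2' : -2 < k ∧ k < 2 := abs_lt.mp (not_le.mp h2)
      have hk01 : k = -1 ∨ k = 0 ∨ k = 1 := by omega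
      rcases hk01 with rfl | rfl | rfl
      · have : |((-1 : ℤ) : ℝ)| ^ p = 1 := by
          norm_num
        rw [this, hCC]
        have hle := (le_max_right (B 1) (B (-1))).trans
          (le_max_left (max (B 1) (B (-1))) (8 * C1 ^ 2))
        simpa using hle
      · have hb0 : B 0 = 0 := by
          rw [hB, hbnd]; norm_num
        rw [hb0]
        have : |((0 : ℤ) : ℝ)| ^ p = 0 := by
          norm_num
          exact Real.zero_rpow (by linarith)
        rw [this]
        norm_num
      · have : |((1 : ℤ) : ℝ)| ^ p = 1 := by norm_num
        rw [this, hCC]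
        have hle := (le_max_left (B 1) (B (-1))).trans
          (le_max_left (max (B 1) (B (-1))) (8 * C1 ^ 2))
        simpa using hle
  have hsum_base : Summable (fun k : ℤ => CC * (1 / |(k:ℝ)| ^ p)) := by
    have h1 : Summable (fun n : ℤ => 1 / |(n:ℝ)| ^ p) := by
      have := (Real.summable_one_div_int_add_rpow 0 p).mpr hp1
      simpa using this
    exact h1.mul_left CC
  have hBsum : Summable B := Summable.of_nonneg_of_le hBnn hcmp hsum_base
  -- dominated convergence for the series
  have htendS : Filter.Tendsto
      (fun τ => ∑' k : ℤ, w k * ‖duhamelSq β η u τ k - duhamelSq β η u t k‖ ^ 2)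
      (nhdsWithin t (Set.Icc (0:ℝ) T)) (nhds 0) := by
    have hab : ∀ k : ℤ, Filter.Tendsto
        (fun τ => w k * ‖duhamelSq β η u τ k - duhamelSq β η u t k‖ ^ 2)
        (nhdsWithin t (Set.Icc (0:ℝ) T)) (nhds 0) := by
      intro k
      have h1 : Filter.Tendsto (fun τ => duhamelSq β η u τ k - duhamelSq β η u t k)
          (nhdsWithin t (Set.Icc (0:ℝ) T)) (nhds 0) := by
        have := (hFcont k).sub (tendsto_const_nhds
          (x := duhamelSq β η u t k) (f := nhdsWithin t (Set.Icc (0:ℝ) T)))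
        simpa using this
      have h2 := h1.norm
      rw [norm_zero] at h2
      have h3 := (h2.pow 2).const_mul (w k)
      simpa using h3
    have hbound : ∀ᶠ τ in nhdsWithin t (Set.Icc (0:ℝ) T), ∀ k : ℤ,
        ‖w k * ‖duhamelSq β η u τ k - duhamelSq β η u t k‖ ^ 2‖ ≤ B k := by
      filter_upwards [self_mem_nhdsWithin] with τ hτ
      intro k
      have hd : ‖duhamelSq β η u τ k - duhamelSq β η u t k‖ ≤ 2 * bnd k :=
        (norm_sub_le _ _).trans (by linarith [hFbnd k τ hτ, hFbnd k t ht])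
      rw [Real.norm_of_nonneg (mul_nonneg (hwnn k) (sq_nonneg _)), hB]
      exact mul_le_mul_of_nonneg_left (pow_le_pow_left₀ (norm_nonneg _) hd 2) (hwnn k)
    have main := tendsto_tsum_of_dominated_convergence (𝓕 := nhdsWithin t (Set.Icc (0:ℝ) T))
      (f := fun τ (k : ℤ) => w k * ‖duhamelSq β η u τ k - duhamelSq β η u t k‖ ^ 2)
      (g := fun _ => (0:ℝ)) (bound := B) hBsum hab hbound
    rwa [tsum_zero] at main
  -- conclusion
  have hεS : (0:ℝ) < ε ^ 2 / (2 * Real.pi) := by positivity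
  have hev : ∀ᶠ τ in nhdsWithin t (Set.Icc (0:ℝ) T),
      hsNorm (s + δ) (fun k => duhamelSq β η u τ k - duhamelSq β η u t k) < ε := by
    filter_upwards [htendS.eventually_lt_const hεS] with τ hS
    rw [hsNorm, Real.sqrt_lt' hε]
    have hS' : (∑' k : ℤ, (1 + (k:ℝ) ^ 2) ^ (s + δ) *
        ‖duhamelSq β η u τ k - duhamelSq β η u t k‖ ^ 2) < ε ^ 2 / (2 * Real.pi) := hS
    rw [lt_div_iff₀ (by positivity : (0:ℝ) < 2 * Real.pi)] at hS'
    linarith [hS']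
  rw [eventually_nhdsWithin_iff] at hev
  obtain ⟨ρ, hρ, h⟩ := Metric.eventually_nhds_iff.mp hev
  exact ⟨ρ, hρ, fun τ hτm hd => h (by rwa [Real.dist_eq]) hτm⟩
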